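/- Let p ≥ 5, k an algebraically closed field of characteristic p, χ a smooth k-character of K₀(p) trivial on Z₁, and E a nonsplit extension of χ𝔞 by χ as smooth K₀(p)-representations. Then E admits a k-basis (e₀, e₁) such that K₀(p) acts on e_i through χ𝔞^i and (1+pa b; pc 1+pd)·e₁ = e₁ + c̄·e₀ for all a,b,c,d ∈ Z_p, where c̄ is c mod p. -/

import Mathlib

/-- The subgroup `K₀(p)` of `GL₂(ℤ_p)`: matrices whose lower-left entry lies in `pℤ_p`. -/
def K0 (p : ℕ) [Fact p.Prime] : Subgroup (GL (Fin 2) ℤ_[p]) where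
  carrier := {g | ∃ c : ℤ_[p], (g : Matrix (Fin 2) (Fin 2) ℤ_[p]) 1 0 = (p : ℤ_[p]) * c}
  one_mem' := ⟨0, by simp [Matrix.one_apply]⟩
  mul_mem' := by
    rintro a b ⟨c, hc⟩ ⟨d, hd⟩
    refine ⟨c * (b : Matrix (Fin 2) (Fin 2) ℤ_[p]) 0 0 +
      (a : Matrix (Fin 2) (Fin 2) ℤ_[p]) 1 1 * d, ?_⟩
    simp only [Units.val_mul, Matrix.mul_apply, Fin.sum_univ_two, hc, hd]
    ring
  inv_mem' := by
    rintro a ⟨c, hc⟩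
    refine ⟨-(Ring.inverse (a : Matrix (Fin 2) (Fin 2) ℤ_[p]).det * c), ?_⟩
    rw [Matrix.GeneralLinearGroup.coe_inv, Matrix.inv_def, Matrix.adjugate_fin_two]
    simp [hc]
    ring

/-- `g` belongs to `Z₁ = 1 + pℤ_p`, viewed as scalar matrices. -/
def IsZ1 (p : ℕ) [Fact p.Prime] (g : GL (Fin 2) ℤ_[p]) : Prop :=
  ∃ z : ℤ_[p], (g : Matrix (Fin 2) (Fin 2) ℤ_[p]) =
    (1 + (p : ℤ_[p]) * z) • (1 : Matrix (Fin 2) (Fin 2) ℤ_[p])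

/-- A character of `K₀(p)` is smooth if it is trivial on some principal congruence
subgroup. -/
def IsSmoothChar (p : ℕ) [Fact p.Prime] (k : Type) [Field k] (χ : K0 p →* kˣ) : Prop :=
  ∃ n : ℕ, 0 < n ∧ ∀ g : K0 p,
    (∀ i j, ((g : GL (Fin 2) ℤ_[p]) : Matrix (Fin 2) (Fin 2) ℤ_[p]) i j -
        (1 : Matrix (Fin 2) (Fin 2) ℤ_[p]) i j ∈ Ideal.span {(p : ℤ_[p]) ^ n}) → χ g = 1

/-- `ρ` is an extension of the character `ψ` by the character `χ`, realized on `k × k` with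
sub-line `k × {0}`. -/
def IsExt (p : ℕ) [Fact p.Prime] (k : Type) [Field k] (χ ψ : K0 p →* kˣ)
    (ρ : Representation k (K0 p) (k × k)) : Prop :=
  (∀ (g : K0 p) (x : k), ρ g (x, 0) = ((χ g : k) * x, 0)) ∧
  (∀ (g : K0 p) (v : k × k), (ρ g v).2 = (ψ g : k) * v.2)

/-- `ρ` is a smooth representation: some principal congruence subgroup acts trivially. -/
def IsSmoothRep (p : ℕ) [Fact p.Prime] (k : Type) [Field k]
    (ρ : Representation k (K0 p) (k × k)) : Prop :=
  ∃ n : ℕ, 0 < n ∧ ∀ g : K0 p,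
    (∀ i j, ((g : GL (Fin 2) ℤ_[p]) : Matrix (Fin 2) (Fin 2) ℤ_[p]) i j -
        (1 : Matrix (Fin 2) (Fin 2) ℤ_[p]) i j ∈ Ideal.span {(p : ℤ_[p]) ^ n}) →
      ρ g = LinearMap.id

/-- `ρ` is trivial on the pro-`p` center `Z₁`. -/
def IsZ1TrivialRep (p : ℕ) [Fact p.Prime] (k : Type) [Field k]
    (ρ : Representation k (K0 p) (k × k)) : Prop :=
  ∀ g : K0 p, IsZ1 p (g : GL (Fin 2) ℤ_[p]) → ρ g = LinearMap.id

/-- The extension `ρ` of `ψ` by `χ` does not split: there is no stable complementary line. -/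
def IsNonsplit (p : ℕ) [Fact p.Prime] (k : Type) [Field k] (ψ : K0 p →* kˣ)
    (ρ : Representation k (K0 p) (k × k)) : Prop :=
  ¬ ∃ v : k × k, v.2 ≠ 0 ∧ ∀ g : K0 p, ρ g v = (ψ g : k) • v

/-- The value at `g ∈ K₀(p)` of the character `𝔞 : (a b; pc d) ↦ a·d⁻¹ mod p`. -/
noncomputable def aVal (p : ℕ) [Fact p.Prime] (k : Type) [Field k] [CharP k p]
    (g : K0 p) : k :=
  ZMod.castHom (dvd_refl p) k
    (PadicInt.toZMod (((g : GL (Fin 2) ℤ_[p]) : Matrix (Fin 2) (Fin 2) ℤ_[p]) 0 0) *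
      (PadicInt.toZMod (((g : GL (Fin 2) ℤ_[p]) : Matrix (Fin 2) (Fin 2) ℤ_[p]) 1 1))⁻¹)


namespace NEB
open PadicInt

variable {p : ℕ} [hp : Fact p.Prime]

lemma toZMod_eq_zero_iff (x : ℤ_[p]) : PadicInt.toZMod x = 0 ↔ (p:ℤ_[p]) ∣ x := by
  rw [← RingHom.mem_ker, PadicInt.ker_toZMod, PadicInt.maximalIdeal_eq_span_p,
    Ideal.mem_span_singleton]

lemma isUnit_of_toZMod_ne_zero (x : ℤ_[p]) (h : PadicInt.toZMod x ≠ 0) : IsUnit x := by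
  by_contra hu
  have hx : x ∈ IsLocalRing.maximalIdeal ℤ_[p] := hu
  rw [PadicInt.maximalIdeal_eq_span_p, Ideal.mem_span_singleton] at hx
  exact h ((toZMod_eq_zero_iff x).2 hx)

lemma toZMod_p : (PadicInt.toZMod ((p : ℤ_[p]))) = 0 := by
  rw [map_natCast, ZMod.natCast_self]

lemma toZMod_one_iff (x : ℤ_[p]) : PadicInt.toZMod x = 1 ↔ ∃ a, x = 1 + (p:ℤ_[p]) * a := by
  constructor
  · intro h
    have : PadicInt.toZMod (x - 1) = 0 := by rw [map_sub, h, map_one, sub_self]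
    obtain ⟨a, ha⟩ := (toZMod_eq_zero_iff _).1 this
    exact ⟨a, by linear_combination ha⟩
  · rintro ⟨a, rfl⟩
    rw [map_add, map_one, map_mul, toZMod_p, zero_mul, add_zero]

/-- entrywise divisibility of matrices -/
lemma entdvd_mul_left {r : ℤ_[p]} {X Y : Matrix (Fin 2) (Fin 2) ℤ_[p]}
    (h : ∀ i j, r ∣ X i j) (i j : Fin 2) : r ∣ (X * Y) i j := by
  rw [Matrix.mul_apply, Fin.sum_univ_two]
  exact dvd_add ((h i 0).mul_right _) ((h i 1).mul_right _)

lemma entdvd_pow {r : ℤ_[p]} {X : Matrix (Fin 2) (Fin 2) ℤ_[p]}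
    (h : ∀ i j, r ∣ X i j) (e : ℕ) (he : 1 ≤ e) : ∀ i j, r ^ e ∣ (X ^ e) i j := by
  induction e with
  | zero => omega
  | succ n ih =>
    intro i j
    rcases Nat.eq_or_lt_of_le he with h1 | h1
    · simpa [pow_one, ← h1] using h i j
    · have hn : 1 ≤ n := by omega
      rw [pow_succ, pow_succ, Matrix.mul_apply, Fin.sum_univ_two]
      exact dvd_add (mul_dvd_mul (ih hn i 0) (h 0 j)) (mul_dvd_mul (ih hn i 1) (h 1 j))

lemma binom_expand (A : Matrix (Fin 2) (Fin 2) ℤ_[p]) :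
    (1 + A) ^ p - 1 = ∑ m ∈ Finset.range p, (p.choose m) • A ^ (p - m) := by
  have h := (Commute.one_left A).add_pow p
  rw [Finset.sum_range_succ] at h
  simp only [one_pow, one_mul, Nat.sub_self, pow_zero, Nat.choose_self, Nat.cast_one, mul_one] at h
  rw [h, add_sub_cancel_right]
  refine Finset.sum_congr rfl fun m _ => ?_
  rw [nsmul_eq_mul, (Nat.cast_commute (p.choose m) (A ^ (p - m))).eq]

lemma nsmul_entry (c : ℕ) (X : Matrix (Fin 2) (Fin 2) ℤ_[p]) (i j : Fin 2) :
    (c • X) i j = (c : ℤ_[p]) * X i j := by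
  simp [nsmul_eq_mul]

/-- step: if M ≡ 1 mod p^j then M^p ≡ 1 mod p^(j+1) -/
lemma pow_p_step (j : ℕ) (hj : 1 ≤ j) (M : Matrix (Fin 2) (Fin 2) ℤ_[p])
    (h : ∀ i j', (p:ℤ_[p])^j ∣ (M - 1) i j') :
    ∀ i j', (p:ℤ_[p])^(j+1) ∣ (M ^ p - 1) i j' := by
  intro i j'
  have hM : M = 1 + (M - 1) := by abel
  set A := M - 1 with hA
  rw [hM, binom_expand, Matrix.sum_apply]
  refine Finset.dvd_sum fun m hm => ?_
  rw [Finset.mem_range] at hm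
  rw [nsmul_entry]
  have hp2 : 2 ≤ p := hp.out.two_le
  have he : 1 ≤ p - m := by omega
  rcases Nat.eq_zero_or_pos m with rfl | hm1
  · have hd : (p:ℤ_[p])^(j*(p-0)) ∣ (A ^ (p - 0)) i j' := by
      rw [pow_mul]
      exact entdvd_pow (fun i j => h i j) (p - 0) he i j'
    refine Dvd.dvd.mul_left (dvd_trans (pow_dvd_pow _ ?_) hd) _
    have : 2 ≤ p - 0 := by omega
    calc j + 1 ≤ j * 2 := by omega
    _ ≤ j * (p - 0) := Nat.mul_le_mul_left j this
  · have hc : (p:ℤ_[p]) ∣ (p.choose m : ℤ_[p]) :=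
      Nat.cast_dvd_cast (hp.out.dvd_choose_self (by omega) hm)
    have hd2 : (p:ℤ_[p])^j ∣ (A ^ (p - m)) i j' := by
      have h1 := entdvd_pow (fun i j => h i j) (p - m) he i j'
      rw [← pow_mul] at h1
      exact dvd_trans (pow_dvd_pow _ (Nat.le_mul_of_pos_right j (by omega))) h1
    rw [pow_succ']
    exact mul_dvd_mul hc hd2

/-- base: for M of pro-p Iwahori shape, M^p ≡ 1 mod p -/
lemma pow_p_base (a b c d : ℤ_[p]) (M : Matrix (Fin 2) (Fin 2) ℤ_[p])
    (hM : M = !![1 + (p:ℤ_[p]) * a, b; (p:ℤ_[p]) * c, 1 + (p:ℤ_[p]) * d]) :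
    ∀ i j', (p:ℤ_[p]) ∣ (M ^ p - 1) i j' := by
  intro i j'
  have hp2 : 2 ≤ p := hp.out.two_le
  set A : Matrix (Fin 2) (Fin 2) ℤ_[p] := !![(p:ℤ_[p]) * a, b; (p:ℤ_[p]) * c, (p:ℤ_[p]) * d]
    with hA
  have hM1 : M = 1 + A := by
    rw [hM, hA, Matrix.one_fin_two]
    ext i j
    fin_cases i <;> fin_cases j <;> simp
  have hc0 : ∀ i : Fin 2, (p:ℤ_[p]) ∣ A i 0 := by
    intro i
    fin_cases i <;> simp [hA]
  have hc1 : ∀ j : Fin 2, (p:ℤ_[p]) ∣ A 1 j := by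
    intro j
    fin_cases j <;> simp [hA]
  have hA2 : ∀ i j', (p:ℤ_[p]) ∣ (A * A) i j' := by
    intro i j'
    rw [Matrix.mul_apply, Fin.sum_univ_two]
    exact dvd_add ((hc0 i).mul_right _) (((hc1 j').mul_left _))
  rw [hM1, binom_expand, Matrix.sum_apply]
  refine Finset.dvd_sum fun m hm => ?_
  rw [Finset.mem_range] at hm
  rw [nsmul_entry]
  rcases Nat.eq_zero_or_pos m with rfl | hm1
  · refine Dvd.dvd.mul_left ?_ _
    have hsplit : A ^ (p - 0) = (A * A) * A ^ (p - 2) := by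
      have : p - 0 = 2 + (p - 2) := by omega
      rw [this, pow_add, pow_two]
    rw [hsplit]
    exact entdvd_mul_left hA2 i j'
  · exact Dvd.dvd.mul_right (Nat.cast_dvd_cast (hp.out.dvd_choose_self (by omega) hm)) _

/-- combined: M^(p^n) ≡ 1 mod p^n for n ≥ 1 -/
lemma pow_p_cong (a b c d : ℤ_[p]) (M : Matrix (Fin 2) (Fin 2) ℤ_[p])
    (hM : M = !![1 + (p:ℤ_[p]) * a, b; (p:ℤ_[p]) * c, 1 + (p:ℤ_[p]) * d]) (n : ℕ) (hn : 1 ≤ n) :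
    ∀ i j', (p:ℤ_[p])^n ∣ (M ^ (p ^ n) - 1) i j' := by
  induction n with
  | zero => omega
  | succ m ih =>
    rcases Nat.eq_zero_or_pos m with rfl | hm
    · simpa [pow_one] using pow_p_base a b c d M hM
    · have h1 := ih hm
      have h2 := pow_p_step m hm (M ^ (p ^ m)) h1
      rwa [← pow_mul, ← pow_succ] at h2

variable (p)

/-- the underlying matrix of an element of K₀(p) -/
def m2 (g : K0 p) : Matrix (Fin 2) (Fin 2) ℤ_[p] :=
  ((g : GL (Fin 2) ℤ_[p]) : Matrix (Fin 2) (Fin 2) ℤ_[p])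

variable {p}

lemma m2_mul (g h : K0 p) : m2 p (g * h) = m2 p g * m2 p h := rfl

lemma m2_pow (g : K0 p) (n : ℕ) : m2 p (g ^ n) = (m2 p g) ^ n := by
  induction n with
  | zero => rfl
  | succ m ih => rw [pow_succ, pow_succ, m2_mul, ih]

lemma K0_ext (g h : K0 p) (he : m2 p g = m2 p h) : g = h :=
  Subtype.ext (Units.ext he)

variable (p)

/-- lower unipotent element of K₀(p) : !![1,0;p*c,1] -/
noncomputable def eL (c : ℤ_[p]) : K0 p :=
  ⟨⟨!![1, 0; (p:ℤ_[p]) * c, 1], !![1, 0; -((p:ℤ_[p]) * c), 1],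
    by rw [Matrix.mul_fin_two, Matrix.one_fin_two]; congr 1 <;> ring,
    by rw [Matrix.mul_fin_two, Matrix.one_fin_two]; congr 1 <;> ring⟩,
   ⟨c, by simp⟩⟩

/-- upper unipotent element of K₀(p) : !![1,b;0,1] -/
noncomputable def eU (b : ℤ_[p]) : K0 p :=
  ⟨⟨!![1, b; 0, 1], !![1, -b; 0, 1],
    by rw [Matrix.mul_fin_two, Matrix.one_fin_two]; congr 1 <;> ring,
    by rw [Matrix.mul_fin_two, Matrix.one_fin_two]; congr 1 <;> ring⟩,
   ⟨0, by simp⟩⟩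

/-- diagonal element of K₀(p) -/
noncomputable def eD (α δ : ℤ_[p]ˣ) : K0 p :=
  ⟨⟨!![(α:ℤ_[p]), 0; 0, (δ:ℤ_[p])], !![((α⁻¹:ℤ_[p]ˣ):ℤ_[p]), 0; 0, ((δ⁻¹:ℤ_[p]ˣ):ℤ_[p])],
    by rw [Matrix.mul_fin_two, Matrix.one_fin_two]; congr 1 <;> simp,
    by rw [Matrix.mul_fin_two, Matrix.one_fin_two]; congr 1 <;> simp⟩,
   ⟨0, by simp⟩⟩

variable {p}

lemma m2_eL (c : ℤ_[p]) : m2 p (eL p c) = !![1, 0; (p:ℤ_[p]) * c, 1] := rfl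
lemma m2_eU (b : ℤ_[p]) : m2 p (eU p b) = !![1, b; 0, 1] := rfl
lemma m2_eD (α δ : ℤ_[p]ˣ) : m2 p (eD p α δ) = !![(α:ℤ_[p]), 0; 0, (δ:ℤ_[p])] := rfl
lemma m2_eD_inv (α δ : ℤ_[p]ˣ) :
    m2 p ((eD p α δ)⁻¹) = !![((α⁻¹:ℤ_[p]ˣ):ℤ_[p]), 0; 0, ((δ⁻¹:ℤ_[p]ˣ):ℤ_[p])] := rfl

lemma eL_mul (c c' : ℤ_[p]) : eL p c * eL p c' = eL p (c + c') := by
  apply K0_ext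
  rw [m2_mul, m2_eL, m2_eL, m2_eL, Matrix.mul_fin_two]
  congr 1 <;> ring

lemma eU_mul (b b' : ℤ_[p]) : eU p b * eU p b' = eU p (b + b') := by
  apply K0_ext
  rw [m2_mul, m2_eU, m2_eU, m2_eU, Matrix.mul_fin_two]
  congr 1 <;> ring

lemma eL_pow (c : ℤ_[p]) (n : ℕ) : (eL p c) ^ n = eL p ((n:ℤ_[p]) * c) := by
  induction n with
  | zero =>
    apply K0_ext
    rw [pow_zero, show ((0:ℕ):ℤ_[p]) * c = 0 by simp, m2_eL,
      show m2 p (1 : K0 p) = 1 from rfl, Matrix.one_fin_two]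
    norm_num
  | succ m ih =>
    rw [pow_succ, ih, eL_mul]
    congr 1
    push_cast
    ring

lemma eU_pow (b : ℤ_[p]) (n : ℕ) : (eU p b) ^ n = eU p ((n:ℤ_[p]) * b) := by
  induction n with
  | zero =>
    apply K0_ext
    rw [pow_zero, show ((0:ℕ):ℤ_[p]) * b = 0 by simp, m2_eU,
      show m2 p (1 : K0 p) = 1 from rfl, Matrix.one_fin_two]
  | succ m ih =>
    rw [pow_succ, ih, eU_mul]
    congr 1
    push_cast
    ring

/-- the pro-p Iwahori condition -/
def I1 (g : K0 p) : Prop :=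
  PadicInt.toZMod (m2 p g 0 0) = 1 ∧ PadicInt.toZMod (m2 p g 1 1) = 1

lemma lower_dvd (g : K0 p) : PadicInt.toZMod (m2 p g 1 0) = 0 := by
  obtain ⟨c, hc⟩ := g.2
  rw [show m2 p g 1 0 = (p:ℤ_[p]) * c from hc, map_mul, toZMod_p, zero_mul]

lemma I1_mul {g h : K0 p} (hg : I1 g) (hh : I1 h) : I1 (g * h) := by
  constructor
  · simp [m2_mul, Matrix.mul_apply, Fin.sum_univ_two, hg.1, hh.1, lower_dvd g, lower_dvd h]
  · simp [m2_mul, Matrix.mul_apply, Fin.sum_univ_two, hg.2, hh.2, lower_dvd g, lower_dvd h]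

lemma I1_form {g : K0 p} (hg : I1 g) :
    ∃ a b c d : ℤ_[p], m2 p g =
      !![1 + (p:ℤ_[p]) * a, b; (p:ℤ_[p]) * c, 1 + (p:ℤ_[p]) * d] := by
  obtain ⟨a, ha⟩ := (toZMod_one_iff _).1 hg.1
  obtain ⟨d, hd⟩ := (toZMod_one_iff _).1 hg.2
  obtain ⟨c, hc⟩ := g.2
  refine ⟨a, m2 p g 0 1, c, d, ?_⟩
  have hc' : m2 p g 1 0 = (p:ℤ_[p]) * c := hc
  conv_lhs => rw [Matrix.eta_fin_two (m2 p g)]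
  rw [ha, hc', hd]

lemma I1_of_form {g : K0 p} {a b c d : ℤ_[p]}
    (h : m2 p g = !![1 + (p:ℤ_[p]) * a, b; (p:ℤ_[p]) * c, 1 + (p:ℤ_[p]) * d]) : I1 g := by
  constructor
  · rw [h]
    exact (toZMod_one_iff _).2 ⟨a, by simp⟩
  · rw [h]
    exact (toZMod_one_iff _).2 ⟨d, by simp⟩

lemma I1_eL (c : ℤ_[p]) : I1 (eL p c) :=
  I1_of_form (a := 0) (b := 0) (c := c) (d := 0) (by rw [m2_eL]; norm_num)

lemma I1_eU (b : ℤ_[p]) : I1 (eU p b) :=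
  I1_of_form (a := 0) (b := b) (c := 0) (d := 0) (by rw [m2_eU]; norm_num)

lemma I1_eD {α δ : ℤ_[p]ˣ} (hα : PadicInt.toZMod (α:ℤ_[p]) = 1)
    (hδ : PadicInt.toZMod (δ:ℤ_[p]) = 1) : I1 (eD p α δ) :=
  ⟨by rw [m2_eD]; simpa using hα, by rw [m2_eD]; simpa using hδ⟩

lemma toZMod_unit_inv (u : ℤ_[p]ˣ) :
    PadicInt.toZMod ((u⁻¹ : ℤ_[p]ˣ) : ℤ_[p]) = (PadicInt.toZMod (u : ℤ_[p]))⁻¹ := by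
  have h : PadicInt.toZMod ((u : ℤ_[p])) * PadicInt.toZMod ((u⁻¹ : ℤ_[p]ˣ) : ℤ_[p]) = 1 := by
    rw [← map_mul, Units.mul_inv, map_one]
  exact eq_inv_of_mul_eq_one_right h

/-- smooth characters are trivial on the pro-p Iwahori -/
lemma char_trivial_I1 {k : Type} [Field k] [CharP k p] (χ : K0 p →* kˣ)
    (hχs : IsSmoothChar p k χ) {g : K0 p} (hg : I1 g) : χ g = 1 := by
  obtain ⟨n, hn, hcond⟩ := hχs
  obtain ⟨a, b, c, d, hM⟩ := I1_form hg
  have hdvd := pow_p_cong a b c d (m2 p g) hM n hn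
  have h1 : χ (g ^ (p ^ n)) = 1 := by
    apply hcond
    intro i j
    rw [Ideal.mem_span_singleton]
    have := hdvd i j
    rw [← m2_pow] at this
    rwa [Matrix.sub_apply] at this
  have h2 : (χ g : k) ^ (p ^ n) = 1 := by
    have := congrArg (Units.val) ((map_pow χ g (p ^ n)).symm.trans h1)
    simpa using this
  have h3 : ((χ g : k) - 1) ^ (p ^ n) = 0 := by
    rw [sub_pow_char_pow, h2, one_pow, sub_self]
  have h4 : (χ g : k) = 1 :=
    sub_eq_zero.1 (pow_eq_zero_iff (pow_ne_zero n hp.out.ne_zero) |>.1 h3)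
  exact Units.ext h4

lemma eD_mul (α δ α' δ' : ℤ_[p]ˣ) :
    eD p α δ * eD p α' δ' = eD p (α * α') (δ * δ') := by
  apply K0_ext
  rw [m2_mul, m2_eD, m2_eD, m2_eD, Matrix.mul_fin_two]
  congr 1 <;> simp <;> ring

lemma eD_eU_conj (α δ : ℤ_[p]ˣ) (b : ℤ_[p]) :
    eD p α δ * eU p b * (eD p α δ)⁻¹ =
      eU p ((α:ℤ_[p]) * b * ((δ⁻¹:ℤ_[p]ˣ):ℤ_[p])) := by
  apply K0_ext
  rw [m2_mul, m2_mul, m2_eD, m2_eU, m2_eD_inv, m2_eU, Matrix.mul_fin_two, Matrix.mul_fin_two]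
  have h1 : (α:ℤ_[p]) * ((α⁻¹:ℤ_[p]ˣ):ℤ_[p]) = 1 := α.mul_inv
  have h2 : (δ:ℤ_[p]) * ((δ⁻¹:ℤ_[p]ˣ):ℤ_[p]) = 1 := δ.mul_inv
  ext i j
  fin_cases i <;> fin_cases j <;> simp <;> first
    | linear_combination h1
    | linear_combination h2
    | ring

lemma eD_eL_conj (α δ : ℤ_[p]ˣ) (c : ℤ_[p]) :
    eD p α δ * eL p c * (eD p α δ)⁻¹ =
      eL p ((δ:ℤ_[p]) * c * ((α⁻¹:ℤ_[p]ˣ):ℤ_[p])) := by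
  apply K0_ext
  rw [m2_mul, m2_mul, m2_eD, m2_eL, m2_eD_inv, m2_eL, Matrix.mul_fin_two, Matrix.mul_fin_two]
  have h1 : (α:ℤ_[p]) * ((α⁻¹:ℤ_[p]ˣ):ℤ_[p]) = 1 := α.mul_inv
  have h2 : (δ:ℤ_[p]) * ((δ⁻¹:ℤ_[p]ˣ):ℤ_[p]) = 1 := δ.mul_inv
  ext i j
  fin_cases i <;> fin_cases j <;> simp <;> first
    | linear_combination h1
    | linear_combination h2
    | ring

/-- Iwahori factorization -/
lemma iwahori_fact {g : K0 p} {a b c d : ℤ_[p]} {uα uδ : ℤ_[p]ˣ}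
    (h : m2 p g = !![1 + (p:ℤ_[p]) * a, b; (p:ℤ_[p]) * c, 1 + (p:ℤ_[p]) * d])
    (hαv : (uα : ℤ_[p]) = 1 + (p:ℤ_[p]) * a)
    (hδv : (uδ : ℤ_[p]) = (1 + (p:ℤ_[p]) * d) - ((p:ℤ_[p]) * c) * ((uα⁻¹:ℤ_[p]ˣ):ℤ_[p]) * b) :
    g = eL p (c * ((uα⁻¹:ℤ_[p]ˣ):ℤ_[p])) * eD p uα uδ * eU p (((uα⁻¹:ℤ_[p]ˣ):ℤ_[p]) * b) := by
  apply K0_ext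
  rw [h, m2_mul, m2_mul, m2_eL, m2_eD, m2_eU, Matrix.mul_fin_two, Matrix.mul_fin_two]
  have h1 : (uα:ℤ_[p]) * ((uα⁻¹:ℤ_[p]ˣ):ℤ_[p]) = 1 := uα.mul_inv
  set x : ℤ_[p] := (uα : ℤ_[p])
  set y : ℤ_[p] := ((uα⁻¹:ℤ_[p]ˣ):ℤ_[p])
  ext i j
  fin_cases i <;> fin_cases j <;> simp <;> first
    | linear_combination hαv
    | linear_combination -hαv
    | linear_combination b * h1
    | linear_combination -(b * h1)
    | linear_combination b * h1 + b * hαv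
    | linear_combination -(b * h1) - b * hαv
    | linear_combination (p:ℤ_[p]) * c * h1
    | linear_combination -((p:ℤ_[p]) * c * h1)
    | linear_combination ((p:ℤ_[p]) * c * y * b) * h1 + hδv
    | linear_combination -hδv - ((p:ℤ_[p]) * c * y * b) * h1
    | ring

lemma m2_eD00 (α δ : ℤ_[p]ˣ) : m2 p (eD p α δ) 0 0 = (α:ℤ_[p]) := rfl

lemma m2_eD11 (α δ : ℤ_[p]ˣ) : m2 p (eD p α δ) 1 1 = (δ:ℤ_[p]) := rfl

lemma toZMod_unit_ne_zero (u : ℤ_[p]ˣ) : PadicInt.toZMod ((u:ℤ_[p])) ≠ 0 := by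
  have h : PadicInt.toZMod ((u : ℤ_[p])) * PadicInt.toZMod ((u⁻¹ : ℤ_[p]ˣ) : ℤ_[p]) = 1 := by
    rw [← map_mul, Units.mul_inv, map_one]
  exact left_ne_zero_of_mul_eq_one h

lemma I1_eDinv_mul {α δ : ℤ_[p]ˣ} {g : K0 p}
    (ha : PadicInt.toZMod (m2 p g 0 0) = PadicInt.toZMod ((α:ℤ_[p])))
    (hd : PadicInt.toZMod (m2 p g 1 1) = PadicInt.toZMod ((δ:ℤ_[p]))) :
    I1 ((eD p α δ)⁻¹ * g) := by
  have h00 : m2 p ((eD p α δ)⁻¹) 0 0 = ((α⁻¹:ℤ_[p]ˣ):ℤ_[p]) := rfl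
  have h01 : m2 p ((eD p α δ)⁻¹) 0 1 = 0 := rfl
  have h10 : m2 p ((eD p α δ)⁻¹) 1 0 = 0 := rfl
  have h11 : m2 p ((eD p α δ)⁻¹) 1 1 = ((δ⁻¹:ℤ_[p]ˣ):ℤ_[p]) := rfl
  constructor
  · rw [m2_mul, Matrix.mul_apply, Fin.sum_univ_two, h00, h01]
    rw [zero_mul, add_zero, map_mul, toZMod_unit_inv, ha]
    exact inv_mul_cancel₀ (ha ▸ toZMod_unit_ne_zero α)
  · rw [m2_mul, Matrix.mul_apply, Fin.sum_univ_two, h10, h11]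
    rw [zero_mul, zero_add, map_mul, toZMod_unit_inv, hd]
    exact inv_mul_cancel₀ (hd ▸ toZMod_unit_ne_zero δ)

end NEB
open NEB

set_option maxHeartbeats 1600000 in
/-- Adapted basis for a nonsplit extension: if `ρ` is a nonsplit smooth extension of `χ𝔞` by
`χ` (as representations of `K₀(p)` trivial on `Z₁`), then there is a basis `(e₀, e₁)` of the
underlying two-dimensional space such that `K₀(p)` acts on `e_i` through `χ𝔞^i` and
`(1+pa b; pc 1+pd)·e₁ = e₁ + c̄·e₀`. -/
theorem nonsplit_extension_adapted_basis (p : ℕ) [Fact p.Prime] (hp5 : 5 ≤ p)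
    (k : Type) [Field k] [IsAlgClosed k] [CharP k p]
    (χ ψ : K0 p →* kˣ)
    (hχs : IsSmoothChar p k χ)
    (hχZ : ∀ g : K0 p, IsZ1 p (g : GL (Fin 2) ℤ_[p]) → χ g = 1)
    (hψ : ∀ g : K0 p, (ψ g : k) = (χ g : k) * aVal p k g)
    (ρ : Representation k (K0 p) (k × k))
    (hext : IsExt p k χ ψ ρ) (hsm : IsSmoothRep p k ρ)
    (hZ1 : IsZ1TrivialRep p k ρ) (hns : IsNonsplit p k ψ ρ) :
    ∃ e₀ e₁ : k × k, LinearIndependent k ![e₀, e₁] ∧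
      (∀ g : K0 p, ρ g e₀ = (χ g : k) • e₀) ∧
      (∀ g : K0 p, ∃ t : k, ρ g e₁ = ((χ g : k) * aVal p k g) • e₁ + t • e₀) ∧
      (∀ g : K0 p, ∀ a b c d : ℤ_[p],
        ((g : GL (Fin 2) ℤ_[p]) : Matrix (Fin 2) (Fin 2) ℤ_[p]) =
          !![1 + (p : ℤ_[p]) * a, b; (p : ℤ_[p]) * c, 1 + (p : ℤ_[p]) * d] →
        ρ g e₁ = e₁ + (ZMod.castHom (dvd_refl p) k (PadicInt.toZMod c)) • e₀) := by
  classical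
  obtain ⟨hsub, hquot⟩ := hext
  -- the cocycle
  let f : K0 p → k := fun g => (ρ g ((0:k), (1:k))).1
  have hf : ∀ g : K0 p, f g = (ρ g ((0:k), (1:k))).1 := fun _ => rfl
  have h01 : ∀ g : K0 p, ρ g ((0:k),(1:k)) = (f g, (ψ g : k)) := by
    intro g
    refine Prod.ext rfl ?_
    simpa using hquot g ((0:k),(1:k))
  have hρ : ∀ (g : K0 p) (x y : k), ρ g (x, y) = ((χ g : k) * x + f g * y, (ψ g : k) * y) := by
    intro g x y
    have hxy : ((x,y) : k × k) = x • ((1:k),(0:k)) + y • ((0:k),(1:k)) := by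
      simp [Prod.ext_iff]
    rw [hxy, map_add, LinearMap.map_smul, LinearMap.map_smul, hsub g 1, h01 g]
    simp [Prod.ext_iff]
    constructor <;> ring
  have f_mul : ∀ g h : K0 p, f (g * h) = (χ g : k) * f h + f g * (ψ h : k) := by
    intro g h
    have h1 : ρ (g * h) ((0:k),(1:k)) = ρ g (ρ h ((0:k),(1:k))) := by
      rw [ρ.map_mul]; rfl
    rw [h01 h, hρ g] at h1
    have h2 := congrArg Prod.fst h1
    exact h2
  have f_one : f (1 : K0 p) = 0 := by
    rw [hf, map_one]; rfl
  -- characters are trivial on I1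
  have hχI1 : ∀ g : K0 p, I1 g → χ g = 1 := fun g hg => char_trivial_I1 χ hχs hg
  have hχk : ∀ g : K0 p, I1 g → (χ g : k) = 1 := by
    intro g hg
    rw [hχI1 g hg, Units.val_one]
  have haI1 : ∀ g : K0 p, I1 g → aVal p k g = 1 := by
    intro g hg
    show (ZMod.castHom (dvd_refl p) k)
      (PadicInt.toZMod (m2 p g 0 0) * (PadicInt.toZMod (m2 p g 1 1))⁻¹) = 1
    rw [hg.1, hg.2, inv_one, mul_one, map_one]
  have hψI1 : ∀ g : K0 p, I1 g → (ψ g : k) = 1 := by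
    intro g hg
    rw [hψ g, hχk g hg, haI1 g hg, mul_one]
  have f_add : ∀ g h : K0 p, I1 g → I1 h → f (g * h) = f g + f h := by
    intro g h hg hh
    rw [f_mul, hχk g hg, hψI1 h hh, one_mul, mul_one]
    exact add_comm _ _
  have f_pow : ∀ g : K0 p, I1 g → ∀ n : ℕ, f (g ^ n) = (n : k) * f g := by
    intro g hg n
    induction n with
    | zero => simpa using f_one
    | succ m ih =>
      have hχm : (χ (g ^ m) : k) = 1 := by
        rw [map_pow, Units.val_pow_eq_pow_val, hχk g hg, one_pow]
      rw [pow_succ, f_mul, hχm, hψI1 g hg, one_mul, mul_one, ih]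
      push_cast
      ring
  -- values on the standard subgroups
  set γ : k := f (eL p 1) with hγdef
  set β : k := f (eU p 1) with hβdef
  have fL_nat : ∀ n : ℕ, f (eL p (n:ℤ_[p])) = (n:k) * γ := by
    intro n
    have h1 : eL p ((n:ℤ_[p])) = (eL p 1)^n := by rw [eL_pow, mul_one]
    rw [h1, f_pow _ (I1_eL 1) n]
  have fU_nat : ∀ n : ℕ, f (eU p (n:ℤ_[p])) = (n:k) * β := by
    intro n
    have h1 : eU p ((n:ℤ_[p])) = (eU p 1)^n := by rw [eU_pow, mul_one]
    rw [h1, f_pow _ (I1_eU 1) n]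
  have fL_pmul : ∀ c : ℤ_[p], f (eL p ((p:ℤ_[p]) * c)) = 0 := by
    intro c
    have h1 : eL p ((p:ℤ_[p]) * c) = (eL p c)^p := by rw [eL_pow]
    rw [h1, f_pow _ (I1_eL c) p, CharP.cast_eq_zero k p, zero_mul]
  have fU_pmul : ∀ b : ℤ_[p], f (eU p ((p:ℤ_[p]) * b)) = 0 := by
    intro b
    have h1 : eU p ((p:ℤ_[p]) * b) = (eU p b)^p := by rw [eU_pow]
    rw [h1, f_pow _ (I1_eU b) p, CharP.cast_eq_zero k p, zero_mul]
  have valcast : ∀ x : ZMod p, ((x.val : ℕ) : k) = (ZMod.castHom (dvd_refl p) k) x := by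
    intro x
    rw [ZMod.castHom_apply, ZMod.natCast_val]
  have hsplit : ∀ c : ℤ_[p], ∃ c₁ : ℤ_[p],
      c = (((PadicInt.toZMod c).val : ℕ) : ℤ_[p]) + (p:ℤ_[p]) * c₁ := by
    intro c
    have h0 : PadicInt.toZMod (c - (((PadicInt.toZMod c).val : ℕ) : ℤ_[p])) = 0 := by
      rw [map_sub, map_natCast]
      rw [ZMod.natCast_zmod_val, sub_self]
    obtain ⟨c₁, hc₁⟩ := (toZMod_eq_zero_iff _).1 h0
    exact ⟨c₁, by linear_combination hc₁⟩
  have fL : ∀ c : ℤ_[p], f (eL p c) = (ZMod.castHom (dvd_refl p) k) (PadicInt.toZMod c) * γ := by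
    intro c
    obtain ⟨c₁, hc₁⟩ := hsplit c
    have h2 : eL p c = eL p (((PadicInt.toZMod c).val : ℤ_[p])) * eL p ((p:ℤ_[p]) * c₁) := by
      rw [eL_mul, ← hc₁]
    rw [h2, f_add _ _ (I1_eL _) (I1_eL _), fL_nat, fL_pmul, add_zero, valcast]
  have fU : ∀ b : ℤ_[p], f (eU p b) = (ZMod.castHom (dvd_refl p) k) (PadicInt.toZMod b) * β := by
    intro b
    obtain ⟨b₁, hb₁⟩ := hsplit b
    have h2 : eU p b = eU p (((PadicInt.toZMod b).val : ℤ_[p])) * eU p ((p:ℤ_[p]) * b₁) := by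
      rw [eU_mul, ← hb₁]
    rw [h2, f_add _ _ (I1_eU _) (I1_eU _), fU_nat, fU_pmul, add_zero, valcast]
  -- small numbers are nonzero
  have hcast_ne : ∀ n : ℕ, 0 < n → n < p → ((n:ℕ) : k) ≠ 0 := by
    intro n hn hnp h
    rw [CharP.cast_eq_zero_iff k p] at h
    have := Nat.le_of_dvd hn h
    omega
  have h2k : (2:k) ≠ 0 := by
    have := hcast_ne 2 (by omega) (by omega)
    simpa using this
  have h3k : (3:k) ≠ 0 := by
    have := hcast_ne 3 (by omega) (by omega)
    simpa using this
  -- the scaling element t0 = diag(2,1)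
  have h2z : PadicInt.toZMod (2:ℤ_[p]) ≠ 0 := by
    rw [show (2:ℤ_[p]) = ((2:ℕ):ℤ_[p]) by norm_num, map_natCast]
    intro h
    rw [ZMod.natCast_eq_zero_iff] at h
    have := Nat.le_of_dvd (by omega) h
    omega
  have hu2' : IsUnit (2:ℤ_[p]) := isUnit_of_toZMod_ne_zero _ h2z
  set u2 : ℤ_[p]ˣ := hu2'.unit with hu2def
  have hu2 : (u2 : ℤ_[p]) = 2 := hu2'.unit_spec
  set t0 : K0 p := eD p u2 1 with ht0def
  have haT0 : aVal p k t0 = 2 := by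
    show (ZMod.castHom (dvd_refl p) k)
      (PadicInt.toZMod (m2 p t0 0 0) * (PadicInt.toZMod (m2 p t0 1 1))⁻¹) = 2
    have e1 : m2 p t0 0 0 = (2:ℤ_[p]) := by
      rw [ht0def, m2_eD]
      simp [hu2]
    have e2 : m2 p t0 1 1 = 1 := by
      rw [ht0def, m2_eD]
      simp
    rw [e1, e2, map_one, inv_one, mul_one,
      show (2:ℤ_[p]) = ((2:ℕ):ℤ_[p]) by norm_num, map_natCast, map_natCast]
    norm_num
  have hψt0 : (ψ t0 : k) = (χ t0 : k) * 2 := by rw [hψ t0, haT0]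
  have hχt0 : (χ t0 : k) ≠ 0 := Units.ne_zero _
  -- conjugation identity
  have hconj : ∀ t g : K0 p, I1 g → f (t * g * t⁻¹) * (ψ t : k) = (χ t : k) * f g := by
    intro t g hg
    have e1 : f (t * g) = (χ t : k) * f g + f t := by
      rw [f_mul, hψI1 g hg, mul_one]
    have e2 : f ((t * g * t⁻¹) * t) = (χ (t*g*t⁻¹) : k) * f t + f (t*g*t⁻¹) * (ψ t : k) :=
      f_mul _ _
    have e3 : (t * g * t⁻¹) * t = t * g := by group
    have e4 : (χ (t * g * t⁻¹) : k) = 1 := by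
      have h6 : χ (t * g * t⁻¹) = χ g := by
        rw [map_mul, map_mul, map_inv, mul_comm (χ t) (χ g), mul_inv_cancel_right]
      rw [h6, hχI1 g hg, Units.val_one]
    rw [e3, e1, e4, one_mul] at e2
    linear_combination -e2
  -- vanishing on the upper unipotent subgroup
  have hβ : β = 0 := by
    have hc1 : t0 * eU p 1 * t0⁻¹ = eU p 2 := by
      rw [ht0def, eD_eU_conj]
      congr 1
      rw [hu2]
      simp
    have h5 := hconj t0 (eU p 1) (I1_eU 1)
    rw [hc1, fU 2, fU 1, map_one, map_one, one_mul, hψt0] at h5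
    have h6 : (ZMod.castHom (dvd_refl p) k) (PadicInt.toZMod (2:ℤ_[p])) = 2 := by
      rw [show (2:ℤ_[p]) = ((2:ℕ):ℤ_[p]) by norm_num, map_natCast, map_natCast]
      norm_num
    rw [h6] at h5
    -- h5 : 2 * β * (χ t0 * 2) = χ t0 * β
    have h7 : (χ t0 : k) * (3 * β) = 0 := by linear_combination h5
    rcases mul_eq_zero.1 h7 with h | h
    · exact absurd h hχt0
    · rcases mul_eq_zero.1 h with h' | h'
      · exact absurd h' h3k
      · exact h'
  have hfU0 : ∀ b : ℤ_[p], f (eU p b) = 0 := by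
    intro b
    rw [fU, hβ, mul_zero]
  -- vanishing on the diagonal
  have hfD : ∀ (α δ : ℤ_[p]ˣ), PadicInt.toZMod (α:ℤ_[p]) = 1 → PadicInt.toZMod (δ:ℤ_[p]) = 1 →
      f (eD p α δ) = 0 := by
    intro α δ hα hδ
    have hI : I1 (eD p α δ) := I1_eD hα hδ
    have hcomm : t0 * eD p α δ * t0⁻¹ = eD p α δ := by
      rw [ht0def, eD_mul, mul_comm u2 α, mul_comm 1 δ, ← eD_mul, mul_inv_cancel_right]
    have h5 := hconj t0 _ hI
    rw [hcomm, hψt0] at h5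
    have h6 : (χ t0 : k) * f (eD p α δ) = 0 := by linear_combination h5
    exact (mul_eq_zero.1 h6).resolve_left hχt0
  -- the key formula on I1
  have hkey : ∀ (g : K0 p) (a b c d : ℤ_[p]),
      m2 p g = !![1 + (p:ℤ_[p]) * a, b; (p:ℤ_[p]) * c, 1 + (p:ℤ_[p]) * d] →
      f g = (ZMod.castHom (dvd_refl p) k) (PadicInt.toZMod c) * γ := by
    intro g a b c d hM
    have hαz : PadicInt.toZMod (1 + (p:ℤ_[p])*a) = 1 := (toZMod_one_iff _).2 ⟨a, rfl⟩
    have hαu : IsUnit (1 + (p:ℤ_[p])*a) :=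
      isUnit_of_toZMod_ne_zero _ (by rw [hαz]; exact one_ne_zero)
    have hαv : (hαu.unit : ℤ_[p]) = 1 + (p:ℤ_[p])*a := hαu.unit_spec
    have hαz' : PadicInt.toZMod ((hαu.unit : ℤ_[p])) = 1 := by rw [hαv]; exact hαz
    have hαinv : PadicInt.toZMod ((hαu.unit⁻¹:ℤ_[p]ˣ):ℤ_[p]) = 1 := by
      rw [toZMod_unit_inv, hαz', inv_one]
    set δv : ℤ_[p] :=
      (1 + (p:ℤ_[p])*d) - ((p:ℤ_[p])*c) * ((hαu.unit⁻¹:ℤ_[p]ˣ):ℤ_[p]) * b with hδdef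
    have hδz : PadicInt.toZMod δv = 1 := by
      rw [hδdef, map_sub, map_mul, map_mul, map_mul, toZMod_p, zero_mul, zero_mul, zero_mul,
        sub_zero]
      exact (toZMod_one_iff _).2 ⟨d, rfl⟩
    have hδu : IsUnit δv := isUnit_of_toZMod_ne_zero _ (by rw [hδz]; exact one_ne_zero)
    have hδvv : (hδu.unit : ℤ_[p]) = δv := hδu.unit_spec
    have hδz' : PadicInt.toZMod ((hδu.unit : ℤ_[p])) = 1 := by rw [hδvv]; exact hδz
    have hfac := iwahori_fact hM hαv (by rw [hδvv, hδdef])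
    have hI1L : I1 (eL p (c * ((hαu.unit⁻¹:ℤ_[p]ˣ):ℤ_[p]))) := I1_eL _
    have hI1D : I1 (eD p hαu.unit hδu.unit) := I1_eD hαz' hδz'
    rw [hfac, f_add _ _ (I1_mul hI1L hI1D) (I1_eU _), f_add _ _ hI1L hI1D,
      fL, hfD _ _ hαz' hδz', hfU0, add_zero, add_zero, map_mul, hαinv, mul_one]
  -- nonvanishing of γ
  have hγ : γ ≠ 0 := by
    intro hγ0
    have hf0 : ∀ g : K0 p, I1 g → f g = 0 := by
      intro g hg
      obtain ⟨a, b, c, d, hM⟩ := I1_form hg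
      rw [hkey g a b c d hM, hγ0, mul_zero]
    -- lifted torus
    have hlift : ∀ s : (ZMod p)ˣ, PadicInt.toZMod ((((s : ZMod p).val : ℕ) : ℤ_[p])) = s := by
      intro s
      rw [map_natCast]
      simp [ZMod.natCast_val, ZMod.cast_id]
    have hliftu : ∀ s : (ZMod p)ˣ, IsUnit ((((s : ZMod p).val : ℕ) : ℤ_[p])) := by
      intro s
      apply isUnit_of_toZMod_ne_zero
      rw [hlift]
      exact Units.ne_zero s
    let ul : (ZMod p)ˣ → ℤ_[p]ˣ := fun s => (hliftu s).unit
    have hulz : ∀ s : (ZMod p)ˣ, PadicInt.toZMod ((ul s : ℤ_[p])) = s := by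
      intro s
      rw [(hliftu s).unit_spec]
      exact hlift s
    have hulzinv : ∀ s : (ZMod p)ˣ, PadicInt.toZMod (((ul s)⁻¹ : ℤ_[p]ˣ) : ℤ_[p]) = (s : ZMod p)⁻¹ := by
      intro s
      rw [toZMod_unit_inv, hulz]
    let T : (ZMod p)ˣ × (ZMod p)ˣ → K0 p := fun s => eD p (ul s.1) (ul s.2)
    -- reduction of diagonal entries of any g
    have hdet : ∀ g : K0 p, PadicInt.toZMod (m2 p g 0 0) ≠ 0 ∧ PadicInt.toZMod (m2 p g 1 1) ≠ 0 := by
      intro g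
      have hmul : m2 p g * m2 p (g⁻¹) = 1 := by
        rw [← m2_mul, mul_inv_cancel]
        rfl
      have hdet1 : (m2 p g).det * (m2 p (g⁻¹)).det = 1 := by
        rw [← Matrix.det_mul, hmul, Matrix.det_one]
      have h2 : PadicInt.toZMod ((m2 p g).det) * PadicInt.toZMod ((m2 p (g⁻¹)).det) = 1 := by
        rw [← map_mul, hdet1, map_one]
      have h3 : PadicInt.toZMod ((m2 p g).det) ≠ 0 := left_ne_zero_of_mul_eq_one h2
      rw [Matrix.det_fin_two, map_sub, map_mul, map_mul, lower_dvd g, mul_zero, sub_zero] at h3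
      exact ⟨(mul_ne_zero_iff.1 h3).1, (mul_ne_zero_iff.1 h3).2⟩
    let π : K0 p → (ZMod p)ˣ × (ZMod p)ˣ := fun g =>
      (Units.mk0 _ (hdet g).1, Units.mk0 _ (hdet g).2)
    have hwI1 : ∀ g : K0 p, I1 ((T (π g))⁻¹ * g) := by
      intro g
      refine I1_eDinv_mul ?_ ?_
      · rw [hulz]
        rfl
      · rw [hulz]
        rfl
    have hdecomp : ∀ g : K0 p, g = T (π g) * ((T (π g))⁻¹ * g) := by
      intro g
      group
    have hfT : ∀ g : K0 p, f g = f (T (π g)) := by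
      intro g
      conv_lhs => rw [hdecomp g]
      rw [f_mul, hf0 _ (hwI1 g), mul_zero, zero_add, hψI1 _ (hwI1 g), mul_one]
    have hχT : ∀ g : K0 p, (χ g : k) = (χ (T (π g)) : k) := by
      intro g
      conv_lhs => rw [hdecomp g]
      rw [map_mul, Units.val_mul, hχk _ (hwI1 g), mul_one]
    have hψT : ∀ g : K0 p, (ψ g : k) = (ψ (T (π g)) : k) := by
      intro g
      conv_lhs => rw [hdecomp g]
      rw [map_mul, Units.val_mul, hψI1 _ (hwI1 g), mul_one]
    -- torus multiplicativity up to I1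
    have hTT : ∀ s t, T s * T t = eD p (ul s.1 * ul t.1) (ul s.2 * ul t.2) := by
      intro s t
      exact eD_mul _ _ _ _
    have hTw : ∀ s t, I1 ((T (s*t))⁻¹ * (T s * T t)) := by
      intro s t
      rw [hTT]
      refine I1_eDinv_mul ?_ ?_
      · rw [m2_eD00, Units.val_mul, map_mul, hulz, hulz, hulz, Prod.fst_mul, Units.val_mul]
      · rw [m2_eD11, Units.val_mul, map_mul, hulz, hulz, hulz, Prod.snd_mul, Units.val_mul]
    have hTmul : ∀ s t, T s * T t = T (s*t) * ((T (s*t))⁻¹ * (T s * T t)) := by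
      intro s t
      group
    -- the descended cocycle
    let F : (ZMod p)ˣ × (ZMod p)ˣ → k := fun s => f (T s)
    let X : (ZMod p)ˣ × (ZMod p)ˣ → k := fun s => (χ (T s) : k)
    let Y : (ZMod p)ˣ × (ZMod p)ˣ → k := fun s => (ψ (T s) : k)
    have hYne : ∀ s, Y s ≠ 0 := fun s => Units.ne_zero _
    have hFco : ∀ s t, F (s*t) = X s * F t + F s * Y t := by
      intro s t
      have h1 : f (T s * T t) = X s * F t + F s * Y t := f_mul _ _
      rw [hTmul s t, f_mul, hf0 _ (hTw s t), mul_zero, zero_add, hψI1 _ (hTw s t), mul_one] at h1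
      exact h1
    have hXmul : ∀ s t, X (s*t) = X s * X t := by
      intro s t
      have h1 : (χ (T s * T t) : k) = X s * X t := by rw [map_mul, Units.val_mul]
      rw [hTmul s t, map_mul, Units.val_mul, hχk _ (hTw s t), mul_one] at h1
      exact h1
    have hYmul : ∀ s t, Y (s*t) = Y s * Y t := by
      intro s t
      have h1 : (ψ (T s * T t) : k) = Y s * Y t := by rw [map_mul, Units.val_mul]
      rw [hTmul s t, map_mul, Units.val_mul, hψI1 _ (hTw s t), mul_one] at h1
      exact h1
    let G : (ZMod p)ˣ × (ZMod p)ˣ → k := fun s => F s * (Y s)⁻¹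
    have hGco : ∀ s t, G (s*t) = (X s * (Y s)⁻¹) * G t + G s := by
      intro s t
      show F (s*t) * (Y (s*t))⁻¹ = (X s * (Y s)⁻¹) * (F t * (Y t)⁻¹) + F s * (Y s)⁻¹
      have ht := hYne t
      have hs := hYne s
      rw [hFco, hYmul]
      field_simp
    set S : k := ∑ s : (ZMod p)ˣ × (ZMod p)ˣ, G s with hSdef
    set card : ℕ := Fintype.card ((ZMod p)ˣ × (ZMod p)ˣ) with hcarddef
    have hcard_ne : ((card : ℕ) : k) ≠ 0 := by
      rw [hcarddef, Fintype.card_prod, ZMod.card_units p]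
      intro h
      rw [Nat.cast_mul, mul_self_eq_zero] at h
      rw [CharP.cast_eq_zero_iff k p] at h
      have h1 : p ≤ p - 1 := Nat.le_of_dvd (by omega) h
      omega
    have hsum : ∀ s, S = (X s * (Y s)⁻¹) * S + (card : k) * G s := by
      intro s
      have h1 : ∑ t : (ZMod p)ˣ × (ZMod p)ˣ, G (s*t) = S := by
        rw [hSdef]
        exact Fintype.sum_equiv (Equiv.mulLeft s) _ _ (fun t => rfl)
      calc S = ∑ t : (ZMod p)ˣ × (ZMod p)ˣ, G (s*t) := h1.symm
      _ = ∑ t : (ZMod p)ˣ × (ZMod p)ˣ, ((X s * (Y s)⁻¹) * G t + G s) := by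
          refine Finset.sum_congr rfl fun t _ => ?_
          rw [hGco]
      _ = (X s * (Y s)⁻¹) * S + (card : k) * G s := by
          rw [Finset.sum_add_distrib, ← Finset.mul_sum, Finset.sum_const, ← hSdef]
          rw [Finset.card_univ, ← hcarddef, nsmul_eq_mul]
    have hG : ∀ s, G s = (1 - X s * (Y s)⁻¹) * (S * ((card:k))⁻¹) := by
      intro s
      have h1 := hsum s
      have h2 : (card:k) * G s = (1 - X s * (Y s)⁻¹) * S := by linear_combination -h1
      have h3 : G s = ((card:k))⁻¹ * ((1 - X s * (Y s)⁻¹) * S) := by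
        rw [← h2, ← mul_assoc, inv_mul_cancel₀ hcard_ne, one_mul]
      rw [h3]
      ring
    -- the cocycle is a coboundary: contradiction with nonsplitness
    set u : k := S * ((card:k))⁻¹ with hudef
    have hfform : ∀ g : K0 p, f g = ((ψ g : k) - (χ g : k)) * u := by
      intro g
      have h1 : f g = F (π g) := hfT g
      have h2 : F (π g) = G (π g) * Y (π g) := by
        show F (π g) = F (π g) * (Y (π g))⁻¹ * Y (π g)
        rw [mul_assoc, inv_mul_cancel₀ (hYne (π g)), mul_one]
      rw [h1, h2, hG (π g), hχT g, hψT g]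
      have h3 := hYne (π g)
      field_simp
      exact mul_comm _ _
    apply hns
    refine ⟨(u, 1), one_ne_zero, ?_⟩
    intro g
    rw [hρ g u 1, hfform g]
    refine Prod.ext ?_ ?_
    · show (χ g : k) * u + ((ψ g : k) - (χ g : k)) * u * 1 = ((ψ g : k) • ((u,1):k×k)).1
      rw [Prod.smul_fst, smul_eq_mul]
      ring
    · show (ψ g : k) * 1 = ((ψ g : k) • ((u,1):k×k)).2
      rw [Prod.smul_snd, smul_eq_mul]
  -- assembly of the adapted basis
  refine ⟨((γ:k), (0:k)), ((0:k), (1:k)), ?_, ?_, ?_, ?_⟩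
  · rw [linearIndependent_fin2]
    constructor
    · show ((0:k),(1:k)) ≠ 0
      simp [Prod.ext_iff]
    · intro a
      show a • ((0:k),(1:k)) ≠ ((γ:k), (0:k))
      intro h
      have h1 := congrArg Prod.fst h
      simp at h1
      exact hγ h1.symm
  · intro g
    rw [hsub g γ]
    exact Prod.ext rfl (smul_zero _).symm
  · intro g
    refine ⟨f g * γ⁻¹, ?_⟩
    have hc : ((χ g : k) * aVal p k g) • ((0:k),(1:k)) + (f g * γ⁻¹) • ((γ:k),(0:k))
        = (f g * γ⁻¹ * γ, (χ g : k) * aVal p k g) := by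
      simp [Prod.ext_iff, smul_eq_mul]
    rw [h01 g, hψ g, hc, mul_assoc, inv_mul_cancel₀ hγ, mul_one]
  · intro g a b c d hM
    have hM' : m2 p g = !![1 + (p:ℤ_[p]) * a, b; (p:ℤ_[p]) * c, 1 + (p:ℤ_[p]) * d] := hM
    have hI : I1 g := I1_of_form hM'
    have hfg := hkey g a b c d hM'
    have hc : ((0:k),(1:k)) + ((ZMod.castHom (dvd_refl p) k) (PadicInt.toZMod c)) • ((γ:k),(0:k))
        = ((ZMod.castHom (dvd_refl p) k) (PadicInt.toZMod c) * γ, 1) := by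
      simp [Prod.ext_iff, smul_eq_mul]
    rw [h01 g, hψI1 g hI, hfg, hc]
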